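/- Let A be a 2n×2n real positive definite matrix with ordinary eigenvalues λ₁(A) ≤ λ₂(A) ≤ … and symplectic eigenvalues ν₁(A) ≤ … ≤ νₙ(A). Then ν₁(A)² ≥ λ₁(A)·λ₂(A). In particular, if λ₁(A)λ₂(A) ≥ 1 then A + iΩ ≥ 0, i.e., A is a valid quantum covariance matrix. -/

import Mathlib

open Matrix
open scoped ComplexOrder

/-- Total matrix square root: the PSD square root on PSD matrices, `0` elsewhere. -/
noncomputable def msqrt {𝕜 : Type*} [RCLike 𝕜] {n : Type*} [Fintype n] [DecidableEq n]
    (A : Matrix n n 𝕜) : Matrix n n 𝕜 :=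
  letI := Classical.dec A.PosSemidef
  if h : A.PosSemidef then (h.1.eigenvectorUnitary : Matrix n n 𝕜) *
      diagonal ((↑) ∘ Real.sqrt ∘ h.1.eigenvalues) * star (h.1.eigenvectorUnitary : Matrix n n 𝕜)
    else 0

/-- The matrix geometric mean `A # B = A^{1/2} (A^{-1/2} B A^{-1/2})^{1/2} A^{1/2}`. -/
noncomputable def geomMean {𝕜 : Type*} [RCLike 𝕜] {n : Type*} [Fintype n] [DecidableEq n]
    (A B : Matrix n n 𝕜) : Matrix n n 𝕜 :=
  msqrt A * msqrt ((msqrt A)⁻¹ * B * (msqrt A)⁻¹) * msqrt A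

/-- The standard symplectic form `Ω = [[0, I],[-I, 0]]` in position-momentum ordering. -/
def symForm (n : ℕ) : Matrix (Fin n ⊕ Fin n) (Fin n ⊕ Fin n) ℝ :=
  Matrix.fromBlocks 0 1 (-1) 0

lemma lagrange_id {m : Type*} [Fintype m] (d p q : m → ℝ) :
    ∑ i, ∑ j, d i * d j * (p i * q j - p j * q i)^2
      = 2 * ((∑ i, d i * (p i * p i)) * (∑ i, d i * (q i * q i))
          - (∑ i, d i * (p i * q i))^2) := by
  have h : ∀ i j : m, d i * d j * (p i * q j - p j * q i)^2
      = (d i * (p i * p i)) * (d j * (q j * q j))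
        + (d j * (p j * p j)) * (d i * (q i * q i))
        - 2 * ((d i * (p i * q i)) * (d j * (p j * q j))) := by intros; ring
  simp_rw [h, Finset.sum_sub_distrib, Finset.sum_add_distrib, ← Finset.sum_mul, ← Finset.mul_sum,
    ← Finset.sum_mul]
  ring

lemma key_ineq {m : Type*} [Fintype m] (c : ℝ) (hc : 0 ≤ c) (d p q : m → ℝ)
    (hd : ∀ i j : m, i ≠ j → c ≤ d i * d j) :
    c * ((∑ i, p i * p i) * (∑ i, q i * q i) - (∑ i, p i * q i)^2)
      ≤ (∑ i, d i * (p i * p i)) * (∑ i, d i * (q i * q i)) - (∑ i, d i * (p i * q i))^2 := by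
  have h1 := lagrange_id d p q
  have h2 := lagrange_id (fun _ : m => 1) p q
  simp only [one_mul, mul_one] at h2
  have hle : ∑ i, ∑ j, c * (1 : ℝ) * (p i * q j - p j * q i)^2
      ≤ ∑ i, ∑ j, d i * d j * (p i * q j - p j * q i)^2 := by
    refine Finset.sum_le_sum fun i _ => Finset.sum_le_sum fun j _ => ?_
    rcases eq_or_ne i j with rfl | hij
    · simp [sub_self]
    · exact mul_le_mul_of_nonneg_right (by simpa using hd i j hij) (sq_nonneg _)
  have h2' : ∑ i, ∑ j, c * (1:ℝ) * (p i * q j - p j * q i)^2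
      = 2 * (c * ((∑ i, p i * p i) * (∑ i, q i * q i) - (∑ i, p i * q i)^2)) := by
    simp_rw [mul_one, ← Finset.mul_sum]
    rw [h2]; ring
  rw [h2', h1] at hle
  linarith

lemma bessel2 {m : Type*} [Fintype m] (p q w : m → ℝ)
    (hpw : ∑ i, p i * w i = 0) (hww : ∑ i, w i * w i = ∑ i, p i * p i) :
    (∑ i, p i * q i)^2 + (∑ i, w i * q i)^2 ≤ (∑ i, p i * p i) * (∑ i, q i * q i) := by
  set s := ∑ i, p i * p i with hs
  set a := ∑ i, p i * q i with ha
  set b := ∑ i, w i * q i with hb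
  have hs0 : 0 ≤ s := Finset.sum_nonneg fun i _ => mul_self_nonneg _
  have hq0 : 0 ≤ ∑ i, q i * q i := Finset.sum_nonneg fun i _ => mul_self_nonneg _
  rcases eq_or_lt_of_le hs0 with hse | hsp
  · have hp : ∀ i, p i = 0 := by
      intro i
      have := (Finset.sum_eq_zero_iff_of_nonneg (fun i _ => mul_self_nonneg (p i))).1 hse.symm i
        (Finset.mem_univ i)
      nlinarith [this]
    have hw : ∀ i, w i = 0 := by
      intro i
      have h0 : ∑ i, w i * w i = 0 := by rw [hww, ← hse]
      have := (Finset.sum_eq_zero_iff_of_nonneg (fun i _ => mul_self_nonneg (w i))).1 h0 i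
        (Finset.mem_univ i)
      nlinarith [this]
    have hA0 : a = 0 := by simp [ha, hp]
    have hb0 : b = 0 := by simp [hb, hw]
    rw [hA0, hb0, ← hse]
    norm_num
  · have hr : 0 ≤ ∑ i, (s * q i - a * p i - b * w i) * (s * q i - a * p i - b * w i) :=
      Finset.sum_nonneg fun i _ => mul_self_nonneg _
    have hexp : ∑ i, (s * q i - a * p i - b * w i) * (s * q i - a * p i - b * w i)
        = s * s * (∑ i, q i * q i) + a * a * s + b * b * (∑ i, w i * w i)
          - 2 * s * a * a - 2 * s * b * b + 2 * a * b * (∑ i, p i * w i) := by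
      have h : ∀ i, (s * q i - a * p i - b * w i) * (s * q i - a * p i - b * w i)
          = s * s * (q i * q i) + a * a * (p i * p i) + b * b * (w i * w i)
            - 2 * s * a * (p i * q i) - 2 * s * b * (w i * q i) + 2 * a * b * (p i * w i) := by
        intro i; ring
      simp_rw [h, Finset.sum_add_distrib, Finset.sum_sub_distrib, ← Finset.mul_sum]
      rw [show a = ∑ i, p i * q i from ha, show b = ∑ i, w i * q i from hb,
        show s = ∑ i, p i * p i from hs]
      rw [Finset.sum_add_distrib, Finset.sum_add_distrib, ← Finset.mul_sum, ← Finset.mul_sum,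
        ← Finset.mul_sum]
    rw [hexp, hww, hpw] at hr
    nlinarith [hr, hsp]

lemma quad_diag_bound {m : Type*} [Fintype m] [DecidableEq m] (A : Matrix m m ℝ)
    (hH : A.IsHermitian) (c : ℝ)
    (hc : 0 ≤ c)
    (hev : ∀ i j : m, i ≠ j → c ≤ hH.eigenvalues i * hH.eigenvalues j) (p q : m → ℝ) :
    c * ((∑ i, p i * p i) * (∑ i, q i * q i) - (∑ i, p i * q i)^2)
      ≤ (p ⬝ᵥ A *ᵥ p) * (q ⬝ᵥ A *ᵥ q) - (p ⬝ᵥ A *ᵥ q)^2 := by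
  set U : Matrix m m ℝ := (hH.eigenvectorUnitary : Matrix m m ℝ) with hU
  set g : m → ℝ := hH.eigenvalues with hg
  have hspec : A = U * (diagonal g * Uᵀ) := by
    have := hH.spectral_theorem
    rw [RCLike.ofReal_real_eq_id] at this
    simpa [mul_assoc, star_eq_conjTranspose, conjTranspose_eq_transpose_of_trivial] using this
  have hUU : U * Uᵀ = 1 := by
    have := (hH.eigenvectorUnitary.prop).2
    simpa [star_eq_conjTranspose, conjTranspose_eq_transpose_of_trivial] using this
  have hquad : ∀ x y : m → ℝ, x ⬝ᵥ A *ᵥ y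
      = ∑ i, g i * ((Uᵀ *ᵥ x) i * (Uᵀ *ᵥ y) i) := by
    intro x y
    conv_lhs => rw [hspec]
    rw [← mulVec_mulVec, dotProduct_mulVec, ← mulVec_transpose, ← mulVec_mulVec,
      dotProduct_mulVec]
    simp [dotProduct, vecMul_diagonal, mul_comm, mul_assoc, mul_left_comm]
  have hdot : ∀ x y : m → ℝ, ∑ i, x i * y i = ∑ i, (Uᵀ *ᵥ x) i * (Uᵀ *ᵥ y) i := by
    intro x y
    have : (Uᵀ *ᵥ x) ⬝ᵥ (Uᵀ *ᵥ y) = x ⬝ᵥ y := by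
      rw [dotProduct_mulVec, vecMul_transpose, mulVec_mulVec, hUU, one_mulVec]
    simpa [dotProduct] using this.symm
  have h1 := key_ineq c hc g (Uᵀ *ᵥ p) (Uᵀ *ᵥ q) hev
  rw [hquad p p, hquad q q, hquad p q, hdot p p, hdot q q, hdot p q]
  exact h1

lemma term_nonneg (t : ℝ) (ht : 1 ≤ t) (a b : ℂ) :
    0 ≤ (starRingEnd ℂ) a * ((t : ℂ) * a + Complex.I * b)
      + (starRingEnd ℂ) b * ((t : ℂ) * b - Complex.I * a) := by
  rw [Complex.le_def]
  constructor
  · simp only [Complex.zero_re, Complex.add_re, Complex.mul_re, Complex.sub_re, Complex.sub_im,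
      Complex.add_im, Complex.mul_im, Complex.I_re, Complex.I_im, Complex.conj_re,
      Complex.conj_im, Complex.ofReal_re, Complex.ofReal_im]
    nlinarith [sq_nonneg (a.re - b.im), sq_nonneg (a.im + b.re), sq_nonneg a.re, sq_nonneg a.im,
      sq_nonneg b.re, sq_nonneg b.im]
  · simp only [Complex.zero_im, Complex.add_im, Complex.mul_im, Complex.sub_im, Complex.sub_re,
      Complex.add_re, Complex.mul_re, Complex.I_re, Complex.I_im, Complex.conj_re,
      Complex.conj_im, Complex.ofReal_re, Complex.ofReal_im]
    ring

lemma blockPSD (n : ℕ) (ν : Fin n → ℝ) (hν : ∀ i, 1 ≤ ν i) :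
    ((Matrix.diagonal (Sum.elim ν ν)).map Complex.ofReal
      + Complex.I • (symForm n).map Complex.ofReal).PosSemidef := by
  have hΩc : (symForm n).map Complex.ofReal
      = Matrix.fromBlocks 0 1 (-1) 0 := by
    ext i j
    cases i <;> cases j <;>
      simp [symForm, fromBlocks, Matrix.map_apply, Matrix.one_apply, apply_ite]
  have hDc : (Matrix.diagonal (Sum.elim ν ν)).map Complex.ofReal
      = Matrix.diagonal (fun k => ((Sum.elim ν ν k : ℝ) : ℂ)) := by
    rw [diagonal_map (by simp)]
  refine posSemidef_iff_dotProduct_mulVec.mpr ⟨?_, ?_⟩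
  · rw [IsHermitian, conjTranspose_add, conjTranspose_smul, hDc, hΩc, diagonal_conjTranspose]
    have h1 : star (fun k => ((Sum.elim ν ν k : ℝ) : ℂ)) = fun k => ((Sum.elim ν ν k : ℝ) : ℂ) := by
      ext k; simp [Pi.star_apply, Complex.conj_ofReal]
    rw [h1]
    congr 1
    ext k l
    rcases k with k | k <;> rcases l with l | l <;>
      simp [conjTranspose_apply, fromBlocks, Matrix.one_apply, Complex.star_def,
        Complex.conj_I, apply_ite, eq_comm]
  · intro x
    rw [hDc, hΩc]
    rw [add_mulVec, smul_mulVec, dotProduct_add, dotProduct_smul]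
    have hx : x = Sum.elim (fun i => x (Sum.inl i)) (fun i => x (Sum.inr i)) := by
      ext k; cases k <;> rfl
    set a : Fin n → ℂ := fun i => x (Sum.inl i)
    set b : Fin n → ℂ := fun i => x (Sum.inr i)
    rw [show ((fromBlocks 0 1 (-1) 0 : Matrix _ _ ℂ) *ᵥ x) = Sum.elim b (-a) by
      rw [hx, fromBlocks_mulVec]; simp [neg_mulVec, one_mulVec]]
    have hdiag : (Matrix.diagonal (fun k => ((Sum.elim ν ν k : ℝ) : ℂ))) *ᵥ x
        = fun k => ((Sum.elim ν ν k : ℝ) : ℂ) * x k := by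
      ext k; rw [mulVec_diagonal]
    rw [hdiag]
    have hsplit : ∀ v : (Fin n ⊕ Fin n) → ℂ, star x ⬝ᵥ v
        = ∑ i, (starRingEnd ℂ) (a i) * v (Sum.inl i)
          + ∑ i, (starRingEnd ℂ) (b i) * v (Sum.inr i) := by
      intro v
      rw [dotProduct, Fintype.sum_sum_type]
      rfl
    rw [hsplit, hsplit]
    have hterm : ∀ i : Fin n, (0:ℂ) ≤ (starRingEnd ℂ) (a i) * ((ν i : ℂ) * a i + Complex.I * b i)
        + (starRingEnd ℂ) (b i) * ((ν i : ℂ) * b i - Complex.I * a i) :=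
      fun i => term_nonneg (ν i) (hν i) (a i) (b i)
    calc (0:ℂ) ≤ ∑ i, ((starRingEnd ℂ) (a i) * ((ν i : ℂ) * a i + Complex.I * b i)
        + (starRingEnd ℂ) (b i) * ((ν i : ℂ) * b i - Complex.I * a i)) :=
          Finset.sum_nonneg fun i _ => hterm i
      _ = _ := by
          simp only [Sum.elim_inl, Sum.elim_inr, Pi.neg_apply, smul_eq_mul, Finset.mul_sum,
            show ∀ i, x (Sum.inl i) = a i from fun _ => rfl,
            show ∀ i, x (Sum.inr i) = b i from fun _ => rfl]
          simp only [mul_add, Finset.mul_sum, ← Finset.sum_add_distrib]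
          exact Finset.sum_congr rfl fun i _ => by ring

/-- The smallest symplectic eigenvalue squared dominates the product of the two smallest
ordinary eigenvalues: `ν₁(A)² ≥ λ₁(A) λ₂(A)`. In particular `λ₁ λ₂ ≥ 1` implies `A + iΩ ≥ 0`. -/
theorem sympl_eig_sq_ge_prod_smallest_eigs (n : ℕ) (hn : 0 < n)
    (A : Matrix (Fin n ⊕ Fin n) (Fin n ⊕ Fin n) ℝ) (hA : A.PosDef)
    (S : Matrix (Fin n ⊕ Fin n) (Fin n ⊕ Fin n) ℝ) (ν : Fin n → ℝ)
    (hS : S * symForm n * Sᵀ = symForm n)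
    (hW : S * A * Sᵀ = Matrix.diagonal (Sum.elim ν ν))
    (lam : Fin (n + n) → ℝ) (hmono : Monotone lam)
    (e : Fin (n + n) ≃ (Fin n ⊕ Fin n))
    (hlam : ∀ i, lam i = hA.1.eigenvalues (e i)) :
    lam ⟨0, by omega⟩ * lam ⟨1, by omega⟩ ≤ (⨅ i, ν i) ^ 2 ∧
      (1 ≤ lam ⟨0, by omega⟩ * lam ⟨1, by omega⟩ →
        (A.map Complex.ofReal + Complex.I • (symForm n).map Complex.ofReal).PosSemidef) := by
  classical
  have h0 : (0 : ℕ) < n + n := by omega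
  have h1 : (1 : ℕ) < n + n := by omega
  set Ω := symForm n with hΩdef
  have hΩT : Ωᵀ = -Ω := by
    ext k l
    cases k <;> cases l <;>
      simp [hΩdef, symForm, fromBlocks, transpose_apply, Matrix.one_apply, eq_comm]
  have hΩΩ : Ω * Ω = -1 := by
    rw [hΩdef, symForm, fromBlocks_multiply]
    ext k l
    cases k <;> cases l <;> simp [fromBlocks, Matrix.one_apply]
  have hquadS : ∀ (B : Matrix (Fin n ⊕ Fin n) (Fin n ⊕ Fin n) ℝ) (x y : Fin n ⊕ Fin n),
      (S * B * Sᵀ) x y = S x ⬝ᵥ B *ᵥ S y := by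
    intro B x y
    simp only [mul_apply, transpose_apply, dotProduct, mulVec, Finset.sum_mul, Finset.mul_sum]
    rw [Finset.sum_comm]
    exact Finset.sum_congr rfl fun k _ => Finset.sum_congr rfl fun j _ => by ring
  have hpp : ∀ i : Fin n, S (Sum.inl i) ⬝ᵥ A *ᵥ S (Sum.inl i) = ν i := by
    intro i
    have := congrFun (congrFun hW (Sum.inl i)) (Sum.inl i)
    rw [hquadS] at this
    simpa using this
  have hqq : ∀ i : Fin n, S (Sum.inr i) ⬝ᵥ A *ᵥ S (Sum.inr i) = ν i := by
    intro i
    have := congrFun (congrFun hW (Sum.inr i)) (Sum.inr i)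
    rw [hquadS] at this
    simpa using this
  have hpq : ∀ i : Fin n, S (Sum.inl i) ⬝ᵥ A *ᵥ S (Sum.inr i) = 0 := by
    intro i
    have := congrFun (congrFun hW (Sum.inl i)) (Sum.inr i)
    rw [hquadS] at this
    simpa [Matrix.diagonal_apply_ne] using this
  have hΩval : ∀ i : Fin n, S (Sum.inl i) ⬝ᵥ Ω *ᵥ S (Sum.inr i) = 1 := by
    intro i
    have := congrFun (congrFun hS (Sum.inl i)) (Sum.inr i)
    rw [hquadS] at this
    simpa [hΩdef, symForm, fromBlocks, Matrix.one_apply] using this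
  have hνpos : ∀ i, 0 < ν i := by
    intro i
    have hp0 : S (Sum.inl i) ≠ 0 := by
      intro h
      have h1' := hΩval i
      rw [h] at h1'
      simp [zero_dotProduct] at h1'
    have := hA.dotProduct_mulVec_pos hp0
    rw [star_trivial, hpp i] at this
    exact this
  obtain ⟨i₀, -, hmin⟩ := Finset.exists_min_image (Finset.univ : Finset (Fin n)) ν
    ⟨⟨0, hn⟩, Finset.mem_univ _⟩
  have hmin' : ∀ i, ν i₀ ≤ ν i := fun i => hmin i (Finset.mem_univ i)
  haveI : Nonempty (Fin n) := ⟨⟨0, hn⟩⟩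
  have hinf : (⨅ i, ν i) = ν i₀ :=
    le_antisymm (ciInf_le (Set.finite_range ν).bddBelow i₀) (le_ciInf hmin')
  set p := S (Sum.inl i₀) with hpdef
  set q := S (Sum.inr i₀) with hqdef
  set w := Ωᵀ *ᵥ p with hwdef
  have hΩself : ∀ u : (Fin n ⊕ Fin n) → ℝ, u ⬝ᵥ Ω *ᵥ u = 0 := by
    intro u
    have h1' : u ⬝ᵥ Ω *ᵥ u = (Ωᵀ *ᵥ u) ⬝ᵥ u := by
      rw [dotProduct_mulVec, ← mulVec_transpose]
    have h2' : (Ωᵀ *ᵥ u) ⬝ᵥ u = -(u ⬝ᵥ Ω *ᵥ u) := by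
      rw [hΩT, neg_mulVec, neg_dotProduct, dotProduct_comm]
    rw [h2'] at h1'
    linarith
  have hwq : w ⬝ᵥ q = 1 := by
    rw [hwdef, mulVec_transpose, ← dotProduct_mulVec]
    exact hΩval i₀
  have hpw : p ⬝ᵥ w = 0 := by
    rw [hwdef, hΩT, neg_mulVec, dotProduct_neg, hΩself p, neg_zero]
  have hww : w ⬝ᵥ w = p ⬝ᵥ p := by
    calc w ⬝ᵥ w = (p ᵥ* Ω) ⬝ᵥ (Ωᵀ *ᵥ p) := by rw [hwdef, mulVec_transpose]
      _ = p ⬝ᵥ (Ω *ᵥ (Ωᵀ *ᵥ p)) := (dotProduct_mulVec _ _ _).symm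
      _ = p ⬝ᵥ ((Ω * Ωᵀ) *ᵥ p) := by rw [mulVec_mulVec]
      _ = p ⬝ᵥ p := by rw [hΩT, mul_neg, hΩΩ, neg_neg, one_mulVec]
  have hlampos : ∀ k, 0 < lam k := fun k => by rw [hlam k]; exact hA.eigenvalues_pos _
  have hcpos : 0 < lam ⟨0, h0⟩ * lam ⟨1, h1⟩ := mul_pos (hlampos _) (hlampos _)
  have hev : ∀ i j : (Fin n ⊕ Fin n), i ≠ j →
      lam ⟨0, h0⟩ * lam ⟨1, h1⟩ ≤ hA.1.eigenvalues i * hA.1.eigenvalues j := by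
    intro i j hij
    have hia : hA.1.eigenvalues i = lam (e.symm i) := by
      rw [hlam (e.symm i), e.apply_symm_apply]
    have hjb : hA.1.eigenvalues j = lam (e.symm j) := by
      rw [hlam (e.symm j), e.apply_symm_apply]
    rw [hia, hjb]
    have hab : e.symm i ≠ e.symm j := fun h => hij (e.symm.injective h)
    have habv : (e.symm i).val ≠ (e.symm j).val := fun h => hab (Fin.ext h)
    rcases Nat.eq_zero_or_pos (e.symm i).val with ha | ha
    · have hb : 1 ≤ (e.symm j).val := by omega
      have e0 : lam ⟨0, h0⟩ = lam (e.symm i) := congrArg lam (Fin.ext ha.symm)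
      have e1 : lam ⟨1, h1⟩ ≤ lam (e.symm j) := hmono (by rw [Fin.le_def]; simpa using hb)
      rw [← e0]
      exact mul_le_mul_of_nonneg_left e1 (hlampos _).le
    · have e1 : lam ⟨1, h1⟩ ≤ lam (e.symm i) := hmono (by rw [Fin.le_def]; simp; omega)
      have e0 : lam ⟨0, h0⟩ ≤ lam (e.symm j) := hmono (by rw [Fin.le_def]; simp)
      calc lam ⟨0, h0⟩ * lam ⟨1, h1⟩ ≤ lam (e.symm j) * lam (e.symm i) :=
            mul_le_mul e0 e1 (hlampos _).le (hlampos _).le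
        _ = lam (e.symm i) * lam (e.symm j) := mul_comm _ _
  have hqd := quad_diag_bound A hA.1 (lam ⟨0, h0⟩ * lam ⟨1, h1⟩) hcpos.le hev p q
  have hbess := bessel2 p q w hpw hww
  have hwq' : (∑ i, w i * q i) = 1 := hwq
  have hgram : 1 ≤ (∑ i, p i * p i) * (∑ i, q i * q i) - (∑ i, p i * q i)^2 := by
    rw [hwq'] at hbess
    nlinarith [hbess]
  have hkey : lam ⟨0, h0⟩ * lam ⟨1, h1⟩ ≤ (ν i₀)^2 := by
    rw [hpp i₀, hqq i₀, hpq i₀] at hqd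
    have h2 : lam ⟨0, h0⟩ * lam ⟨1, h1⟩ * 1
        ≤ lam ⟨0, h0⟩ * lam ⟨1, h1⟩
            * ((∑ i, p i * p i) * (∑ i, q i * q i) - (∑ i, p i * q i)^2) :=
      mul_le_mul_of_nonneg_left hgram hcpos.le
    nlinarith [hqd, h2]
  constructor
  · rw [hinf]
    exact hkey
  · intro hone
    have hν1 : ∀ i, 1 ≤ ν i := by
      have hi0 : 1 ≤ ν i₀ := by nlinarith [hkey, hνpos i₀, hone]
      exact fun i => hi0.trans (hmin' i)
    have hpsd := blockPSD n ν hν1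
    -- invertibility of S
    have hSR : S * (Ω * Sᵀ * -Ω) = 1 := by
      rw [show S * (Ω * Sᵀ * -Ω) = S * Ω * Sᵀ * -Ω by simp only [mul_assoc], hS, mul_neg, hΩΩ,
        neg_neg]
    have hRS : (Ω * Sᵀ * -Ω) * S = 1 := mul_eq_one_comm.mp hSR
    set R := Ω * Sᵀ * -Ω with hRdef
    have hmapmul : ∀ X Y : Matrix (Fin n ⊕ Fin n) (Fin n ⊕ Fin n) ℝ,
        (X * Y).map Complex.ofReal = X.map Complex.ofReal * Y.map Complex.ofReal := by
      intro X Y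
      exact Matrix.map_mul (f := Complex.ofRealHom)
    have hmapT : ∀ X : Matrix (Fin n ⊕ Fin n) (Fin n ⊕ Fin n) ℝ,
        (X.map Complex.ofReal)ᴴ = (Xᵀ).map Complex.ofReal := by
      intro X; ext i j; simp [conjTranspose_apply, Complex.conj_ofReal]
    set Sc := S.map Complex.ofReal with hScdef
    set Rc := R.map Complex.ofReal with hRcdef
    set Mc := A.map Complex.ofReal + Complex.I • Ω.map Complex.ofReal with hMcdef
    have hRcSc : Rc * Sc = 1 := by
      rw [hRcdef, hScdef, ← hmapmul, hRS]
      exact Matrix.map_one _ (by simp) (by simp)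
    have hconj : Sc * Mc * Scᴴ = (Matrix.diagonal (Sum.elim ν ν)).map Complex.ofReal
        + Complex.I • Ω.map Complex.ofReal := by
      rw [hMcdef, hScdef, hmapT S, mul_add, add_mul, Matrix.mul_smul, Matrix.smul_mul,
        ← hmapmul, ← hmapmul, ← hmapmul, ← hmapmul, hW, hS]
    have h2 : Rc * (Sc * Mc * Scᴴ) * Rcᴴ = Mc := by
      rw [show Rc * (Sc * Mc * Scᴴ) * Rcᴴ = (Rc * Sc) * Mc * (Scᴴ * Rcᴴ) by
        simp only [mul_assoc], ← conjTranspose_mul, hRcSc, conjTranspose_one, one_mul, mul_one]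
    have hfinal := hpsd.mul_mul_conjTranspose_same Rc
    rw [← hΩdef] at hfinal
    rw [← hconj, h2] at hfinal
    exact hfinal
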